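/- Let (X, X̃) be a Cauchy pair on V with eigenvalues {x_i} of X and {x̃_i} of X̃; let α_i = tr(E_i(X - X̃)) and α̃_j = tr(Ẽ_j(X̃ - X)), where E_i, Ẽ_j are the primitive idempotents of X and X̃. Then for every i, ∑_j α_i α̃_j / (x_i - x̃_j)^2 = -1. -/

import Mathlib

open Module LinearMap

lemma traceRankOne {K V : Type*} [Field K] [AddCommGroup V] [Module K V]
    [FiniteDimensional K V] (φ : V →ₗ[K] K) (a : V) :
    LinearMap.trace K V (φ.smulRight a) = φ a := by
  have h : φ.smulRight a = dualTensorHom K V V (φ ⊗ₜ[K] a) := by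
    ext w; simp
  rw [h, LinearMap.trace_eq_contract_apply, contractLeft_apply]

def IsCauchyPair (K V : Type*) [Field K] [AddCommGroup V] [Module K V]
    (X Xt : Module.End K V) : Prop :=
  (⨆ μ : K, X.eigenspace μ) = ⊤ ∧
  (⨆ μ : K, Xt.eigenspace μ) = ⊤ ∧
  Module.rank K (LinearMap.range (X - Xt)) = 1 ∧
  ∀ W : Submodule K V, W.map (X : V →ₗ[K] V) ≤ W → W.map (Xt : V →ₗ[K] V) ≤ W →
    W = ⊥ ∨ W = ⊤

theorem stmt15 {K V : Type*} [Field K] [AddCommGroup V] [Module K V] [FiniteDimensional K V]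
    {n : ℕ} {X Xt : Module.End K V} (h : IsCauchyPair K V X Xt)
    (x : Fin n → K) (hxinj : Function.Injective x)
    (hxeig : ∀ i, X.HasEigenvalue (x i))
    (hxall : ∀ μ : K, X.HasEigenvalue μ → ∃ i, x i = μ)
    (xt : Fin n → K) (hxtinj : Function.Injective xt)
    (hxteig : ∀ i, Xt.HasEigenvalue (xt i))
    (hxtall : ∀ μ : K, Xt.HasEigenvalue μ → ∃ i, xt i = μ)
    (E : Fin n → Module.End K V)
    (hE1 : ∀ i, ∀ u ∈ X.eigenspace (x i), E i u = u)
    (hE0 : ∀ i j, i ≠ j → ∀ u ∈ X.eigenspace (x j), E i u = 0)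
    (Et : Fin n → Module.End K V)
    (hEt1 : ∀ i, ∀ u ∈ Xt.eigenspace (xt i), Et i u = u)
    (hEt0 : ∀ i j, i ≠ j → ∀ u ∈ Xt.eigenspace (xt j), Et i u = 0)
    (i : Fin n) :
    ∑ j, (LinearMap.trace K V (E i * (X - Xt)) * LinearMap.trace K V (Et j * (Xt - X))) /
        (x i - xt j) ^ 2 = -1 := by
  obtain ⟨hX, hXt, hrank, hirr⟩ := h
  -- rank-one decomposition
  obtain ⟨u₀, hu₀, hu₀span⟩ := rank_eq_one_iff.mp hrank
  set u : V := (u₀ : V) with hu_def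
  have hune : u ≠ 0 := fun hz => hu₀ (Subtype.ext hz)
  obtain ⟨g, hg⟩ := (LinearMap.toSpanSingleton K V u).exists_leftInverse_of_injective
    (LinearMap.ker_toSpanSingleton (R := K) hune)
  have hgu : g u = 1 := by
    have := congrArg (fun L => L (1 : K)) hg
    simpa [LinearMap.toSpanSingleton_apply] using this
  set φ : V →ₗ[K] K := g ∘ₗ (X - Xt) with hφ_def
  have hφ : ∀ w : V, (X - Xt) w = φ w • u := by
    intro w
    have hmem : (X - Xt) w ∈ LinearMap.range ((X : V →ₗ[K] V) - Xt) := ⟨w, rfl⟩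
    obtain ⟨c, hc⟩ := hu₀span ⟨(X - Xt) w, hmem⟩
    have hc' : c • u = (X - Xt) w := congrArg Subtype.val hc
    have : φ w = c := by
      simp only [hφ_def, LinearMap.comp_apply, ← hc', map_smul, hgu, smul_eq_mul, mul_one]
    rw [this, hc']
  -- common eigenvector with common eigenvalue is impossible
  have CE : ∀ w : V, w ≠ 0 → ∀ μ : K, X w = μ • w → Xt w = μ • w → False := by
    intro w hw μ hXw hXtw
    have h1 : (Submodule.span K {w}).map (X : V →ₗ[K] V) ≤ Submodule.span K {w} := by
      rw [Submodule.map_span_le]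
      intro m hm
      rw [Set.mem_singleton_iff] at hm
      rw [hm, hXw]
      exact Submodule.smul_mem _ _ (Submodule.mem_span_singleton_self w)
    have h2 : (Submodule.span K {w}).map (Xt : V →ₗ[K] V) ≤ Submodule.span K {w} := by
      rw [Submodule.map_span_le]
      intro m hm
      rw [Set.mem_singleton_iff] at hm
      rw [hm, hXtw]
      exact Submodule.smul_mem _ _ (Submodule.mem_span_singleton_self w)
    rcases hirr _ h1 h2 with hbot | htop
    · have hmem : w ∈ Submodule.span K {w} := Submodule.mem_span_singleton_self w
      rw [hbot] at hmem
      exact hw ((Submodule.mem_bot K).mp hmem)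
    · have hz : ∀ v : V, (X - Xt) v = 0 := by
        intro v
        have hv : v ∈ Submodule.span K {w} := htop ▸ Submodule.mem_top
        obtain ⟨c, rfl⟩ := Submodule.mem_span_singleton.mp hv
        rw [map_smul, LinearMap.sub_apply, hXw, hXtw, sub_self, smul_zero]
      have h0 : X - Xt = 0 := LinearMap.ext hz
      rw [h0] at hrank
      rw [LinearMap.range_zero, rank_bot] at hrank
      exact zero_ne_one hrank
  have hzeroX : ∀ (z : V) (μ : K), X z = μ • z → φ z = 0 → z = 0 := by
    intro z μ h1 h2
    by_contra hz
    refine CE z hz μ h1 ?_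
    have := hφ z
    rw [h2, zero_smul, LinearMap.sub_apply, sub_eq_zero] at this
    rw [← this, h1]
  have hzeroXt : ∀ (z : V) (μ : K), Xt z = μ • z → φ z = 0 → z = 0 := by
    intro z μ h1 h2
    by_contra hz
    refine CE z hz μ ?_ h1
    have := hφ z
    rw [h2, zero_smul, LinearMap.sub_apply, sub_eq_zero] at this
    rw [this, h1]
  -- eigenvectors
  choose e he using fun i => (hxeig i).exists_hasEigenvector
  choose f hf using fun j => (hxteig j).exists_hasEigenvector
  have hXe : ∀ k, X (e k) = x k • e k := fun k => Module.End.mem_eigenspace_iff.mp (he k).1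
  have hXtf : ∀ k, Xt (f k) = xt k • f k := fun k => Module.End.mem_eigenspace_iff.mp (hf k).1
  have hvne : ∀ k, φ (e k) ≠ 0 := fun k hz => (he k).2 (hzeroX _ _ (hXe k) hz)
  have hcne : ∀ k, φ (f k) ≠ 0 := fun k hz => (hf k).2 (hzeroXt _ _ (hXtf k) hz)
  -- multiplicity-free
  have hmf : ∀ k, X.eigenspace (x k) ≤ Submodule.span K {e k} := by
    intro k w hw
    have hXw : X w = x k • w := Module.End.mem_eigenspace_iff.mp hw
    have hz1 : X (φ w • e k - φ (e k) • w) = x k • (φ w • e k - φ (e k) • w) := by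
      rw [map_sub, map_smul, map_smul, hXe k, hXw]
      module
    have hz2 : φ (φ w • e k - φ (e k) • w) = 0 := by
      simp only [map_sub, map_smul, smul_eq_mul]
      ring
    have hz0 := hzeroX _ _ hz1 hz2
    rw [sub_eq_zero] at hz0
    have hw' : (φ w / φ (e k)) • e k = w := by
      rw [div_eq_mul_inv, mul_comm, mul_smul, hz0, inv_smul_smul₀ (hvne k)]
    rw [← hw']
    exact Submodule.smul_mem _ _ (Submodule.mem_span_singleton_self _)
  have hmf' : ∀ k, Xt.eigenspace (xt k) ≤ Submodule.span K {f k} := by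
    intro k w hw
    have hXw : Xt w = xt k • w := Module.End.mem_eigenspace_iff.mp hw
    have hz1 : Xt (φ w • f k - φ (f k) • w) = xt k • (φ w • f k - φ (f k) • w) := by
      rw [map_sub, map_smul, map_smul, hXtf k, hXw]
      module
    have hz2 : φ (φ w • f k - φ (f k) • w) = 0 := by
      simp only [map_sub, map_smul, smul_eq_mul]
      ring
    have hz0 := hzeroXt _ _ hz1 hz2
    rw [sub_eq_zero] at hz0
    have hw' : (φ w / φ (f k)) • f k = w := by
      rw [div_eq_mul_inv, mul_comm, mul_smul, hz0, inv_smul_smul₀ (hcne k)]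
    rw [← hw']
    exact Submodule.smul_mem _ _ (Submodule.mem_span_singleton_self _)
  -- bases
  have hind : LinearIndependent K e :=
    X.eigenvectors_linearIndependent' x hxinj e he
  have hind' : LinearIndependent K f :=
    Xt.eigenvectors_linearIndependent' xt hxtinj f hf
  have hsp : ⊤ ≤ Submodule.span K (Set.range e) := by
    rw [← hX]
    apply iSup_le
    intro μ
    by_cases hμ : X.HasEigenvalue μ
    · obtain ⟨k, rfl⟩ := hxall μ hμ
      refine (hmf k).trans (Submodule.span_mono ?_)
      intro z hz
      rw [Set.mem_singleton_iff] at hz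
      exact ⟨k, hz.symm⟩
    · rw [Module.End.hasEigenvalue_iff, not_ne_iff] at hμ
      rw [hμ]
      exact bot_le
  have hsp' : ⊤ ≤ Submodule.span K (Set.range f) := by
    rw [← hXt]
    apply iSup_le
    intro μ
    by_cases hμ : Xt.HasEigenvalue μ
    · obtain ⟨k, rfl⟩ := hxtall μ hμ
      refine (hmf' k).trans (Submodule.span_mono ?_)
      intro z hz
      rw [Set.mem_singleton_iff] at hz
      exact ⟨k, hz.symm⟩
    · rw [Module.End.hasEigenvalue_iff, not_ne_iff] at hμ
      rw [hμ]
      exact bot_le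
  let b : Basis (Fin n) K V := Basis.mk hind hsp
  let c : Basis (Fin n) K V := Basis.mk hind' hsp'
  have hbe : ∀ k, b k = e k := fun k => Basis.mk_apply hind hsp k
  have hcf : ∀ k, c k = f k := fun k => Basis.mk_apply hind' hsp' k
  -- coordinate lemmas
  have hXcoord : ∀ (w : V) (k : Fin n), b.repr (X w) k = x k * b.repr w k := by
    intro w k
    have hfun : (b.coord k) ∘ₗ (X : V →ₗ[K] V) = x k • b.coord k := by
      apply b.ext
      intro m
      have hx : X (b m) = x m • b m := by rw [hbe m]; exact hXe m
      simp only [LinearMap.comp_apply, LinearMap.smul_apply, smul_eq_mul, hx, map_smul,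
        Basis.coord_apply, Finsupp.smul_apply, Basis.repr_self]
      rcases eq_or_ne m k with rfl | hmk
      · simp
      · simp [Finsupp.single_apply, hmk]
    have := congrArg (fun L : V →ₗ[K] K => L w) hfun
    simpa [Basis.coord_apply] using this
  have hXtcoord : ∀ (w : V) (k : Fin n), c.repr (Xt w) k = xt k * c.repr w k := by
    intro w k
    have hfun : (c.coord k) ∘ₗ (Xt : V →ₗ[K] V) = xt k • c.coord k := by
      apply c.ext
      intro m
      have hx : Xt (c m) = xt m • c m := by rw [hcf m]; exact hXtf m
      simp only [LinearMap.comp_apply, LinearMap.smul_apply, smul_eq_mul, hx, map_smul,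
        Basis.coord_apply, Finsupp.smul_apply, Basis.repr_self]
      rcases eq_or_ne m k with rfl | hmk
      · simp
      · simp [Finsupp.single_apply, hmk]
    have := congrArg (fun L : V →ₗ[K] K => L w) hfun
    simpa [Basis.coord_apply] using this
  -- X applied to f j
  have hXf : ∀ j, X (f j) = xt j • f j + φ (f j) • u := by
    intro j
    have h1 := hφ (f j)
    rw [LinearMap.sub_apply, hXtf j] at h1
    rw [sub_eq_iff_eq_add] at h1
    rw [h1]
    abel
  have hXte : ∀ k, Xt (e k) = x k • e k - φ (e k) • u := by
    intro k
    have h1 := hφ (e k)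
    rw [LinearMap.sub_apply, hXe k] at h1
    rw [sub_eq_iff_eq_add] at h1
    rw [h1]
    abel
  -- expansion lemma in b-coordinates
  have hEb : ∀ (j k : Fin n), (x k - xt j) * b.repr (f j) k = φ (f j) * b.repr u k := by
    intro j k
    have h3 := congrArg (fun w => b.repr w k) (hXf j)
    simp only [map_add, map_smul, Finsupp.add_apply, Finsupp.smul_apply, smul_eq_mul] at h3
    rw [hXcoord (f j) k] at h3
    linear_combination h3
  -- no common eigenvalues
  have hnc : ∀ (i' j : Fin n), x i' ≠ xt j := by
    intro i' j heq
    have hui : b.repr u i' = 0 := by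
      have h4 := hEb j i'
      rw [heq, sub_self, zero_mul] at h4
      exact ((mul_eq_zero.mp h4.symm).resolve_left (hcne j))
    by_cases hex : ∃ k, k ≠ i'
    · obtain ⟨k, hk⟩ := hex
      set W := LinearMap.ker (b.coord i') with hW
      have hWX : W.map (X : V →ₗ[K] V) ≤ W := by
        rintro z hz
        obtain ⟨w, hw, rfl⟩ := hz
        simp only [hW, SetLike.mem_coe, LinearMap.mem_ker, Basis.coord_apply] at hw ⊢
        rw [hXcoord w i', hw, mul_zero]
      have hWXt : W.map (Xt : V →ₗ[K] V) ≤ W := by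
        rintro z hz
        obtain ⟨w, hw, rfl⟩ := hz
        simp only [hW, SetLike.mem_coe, LinearMap.mem_ker, Basis.coord_apply] at hw ⊢
        have hXtw : Xt w = X w - φ w • u := by
          have := hφ w
          rw [LinearMap.sub_apply] at this
          rw [← this]
          abel
        rw [hXtw, map_sub, map_smul, Finsupp.sub_apply, Finsupp.smul_apply, smul_eq_mul,
          hXcoord w i', hw, mul_zero, hui, mul_zero, sub_zero]
      rcases hirr W hWX hWXt with hbot | htop
      · have hek : e k ∈ W := by
          rw [hW, LinearMap.mem_ker, Basis.coord_apply, ← hbe k, Basis.repr_self,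
            Finsupp.single_apply, if_neg hk]
        rw [hbot, Submodule.mem_bot] at hek
        exact (he k).2 hek
      · have hei : e i' ∈ W := htop ▸ Submodule.mem_top
        rw [hW, LinearMap.mem_ker, Basis.coord_apply, ← hbe i', Basis.repr_self,
          Finsupp.single_apply, if_pos rfl] at hei
        exact one_ne_zero hei
    · push_neg at hex
      have huniv : (Finset.univ : Finset (Fin n)) = {i'} := by
        ext k
        simp [hex k]
      have hfj : X (f j) = xt j • f j := by
        have hsum := b.sum_repr (f j)
        rw [huniv, Finset.sum_singleton, hbe i'] at hsum
        rw [← hsum, map_smul, hXe i', heq]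
        rw [smul_comm]
      exact CE (f j) (hf j).2 (xt j) hfj (hXtf j)
  -- expansion lemma in c-coordinates for e i
  have hEc : ∀ (j : Fin n), (x i - xt j) * c.repr (e i) j = φ (e i) * c.repr u j := by
    intro j
    have h3 := congrArg (fun w => c.repr w j) (hXte i)
    simp only [map_sub, map_smul, Finsupp.sub_apply, Finsupp.smul_apply, smul_eq_mul] at h3
    rw [hXtcoord (e i) j] at h3
    linear_combination -h3
  -- idempotent actions
  have hEiu : E i u = b.repr u i • e i := by
    conv_lhs => rw [← b.sum_repr u]
    rw [map_sum]
    rw [Finset.sum_eq_single i]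
    · rw [map_smul, hbe i, hE1 i (e i) (he i).1]
    · intro k _ hk
      rw [map_smul, hbe k, hE0 i k (Ne.symm hk) (e k) (he k).1, smul_zero]
    · intro hi
      exact absurd (Finset.mem_univ i) hi
  have hEtju : ∀ j, Et j u = c.repr u j • f j := by
    intro j
    conv_lhs => rw [← c.sum_repr u]
    rw [map_sum]
    rw [Finset.sum_eq_single j]
    · rw [map_smul, hcf j, hEt1 j (f j) (hf j).1]
    · intro k _ hk
      rw [map_smul, hcf k, hEt0 j k (Ne.symm hk) (f k) (hf k).1, smul_zero]
    · intro hj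
      exact absurd (Finset.mem_univ j) hj
  -- trace formulas
  have hα : LinearMap.trace K V (E i * (X - Xt)) = b.repr u i * φ (e i) := by
    have hP : (E i * (X - Xt)) = φ.smulRight (E i u) := by
      ext w
      rw [Module.End.mul_apply, LinearMap.smulRight_apply, hφ w, map_smul]
    rw [hP, traceRankOne, hEiu, map_smul, smul_eq_mul]
  have hαt : ∀ j, LinearMap.trace K V (Et j * (Xt - X)) = -(c.repr u j * φ (f j)) := by
    intro j
    have hP : (Et j * (Xt - X)) = (-φ).smulRight (Et j u) := by
      ext w
      rw [Module.End.mul_apply, LinearMap.smulRight_apply]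
      have h2 : (Xt - X) w = -((X - Xt) w) := by
        rw [LinearMap.sub_apply, LinearMap.sub_apply, neg_sub]
      rw [h2, hφ w, map_neg, map_smul, LinearMap.neg_apply, neg_smul]
    rw [hP, traceRankOne, hEtju j, LinearMap.neg_apply, map_smul, smul_eq_mul]
  -- the key identity
  have hone : ∑ j, c.repr (e i) j * b.repr (f j) i = 1 := by
    have hsum : ∑ j, c.repr (e i) j • f j = e i := by
      calc ∑ j, c.repr (e i) j • f j
          = ∑ j, c.repr (e i) j • c j := Finset.sum_congr rfl (fun k _ => by rw [hcf k])
        _ = e i := c.sum_repr (e i)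
    have h1 : b.repr (e i) i = 1 := by
      rw [← hbe i, Basis.repr_self, Finsupp.single_apply, if_pos rfl]
    calc ∑ j, c.repr (e i) j * b.repr (f j) i
        = ∑ j, b.repr (c.repr (e i) j • f j) i := by
          refine Finset.sum_congr rfl (fun k _ => ?_)
          rw [map_smul, Finsupp.smul_apply, smul_eq_mul]
      _ = b.repr (∑ j, c.repr (e i) j • f j) i := by
          rw [map_sum, Finsupp.finset_sum_apply]
      _ = 1 := by rw [hsum, h1]
  have hterm : ∀ j, (LinearMap.trace K V (E i * (X - Xt)) *
      LinearMap.trace K V (Et j * (Xt - X))) / (x i - xt j) ^ 2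
      = -(c.repr (e i) j * b.repr (f j) i) := by
    intro j
    have hd : x i - xt j ≠ 0 := sub_ne_zero.mpr (hnc i j)
    rw [hα, hαt j, div_eq_iff (pow_ne_zero 2 hd)]
    have hA := hEb j i
    have hB := hEc j
    linear_combination (φ (e i) * c.repr u j) * hA + ((x i - xt j) * b.repr (f j) i) * hB
  calc ∑ j, (LinearMap.trace K V (E i * (X - Xt)) *
      LinearMap.trace K V (Et j * (Xt - X))) / (x i - xt j) ^ 2
      = ∑ j, -(c.repr (e i) j * b.repr (f j) i) := Finset.sum_congr rfl (fun j _ => hterm j)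
    _ = -∑ j, c.repr (e i) j * b.repr (f j) i := by rw [Finset.sum_neg_distrib]
    _ = -1 := by rw [hone]
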